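/- arXiv:1203.3002 — 2 statements merged into one kernel-verified Lean document; each statement's English description precedes it below -/
import Mathlib

section
/- Assume b = A x̄ + z, let δ' ∈ (0,1) and γ > (1+δ')/(1−δ'), let s̃ ≥ 1 be an integer with ρ₋(A, s̄+s̃) > 0, let λ₀ > 0, η ∈ (0,1), K ∈ ℕ, set λ_{K+1} = η^{K+1}λ₀, and let λ_tgt ∈ (0, λ_{K+1}] be such that both λ_{K+1} and λ_tgt satisfy μ ≥ max{4, (γ+1)/((1−δ')γ − (1+δ'))} · ‖Aᵀz‖_∞ (for μ = λ_{K+1} and μ = λ_tgt). Suppose x̂ ∈ ℝⁿ satisfies ‖x̂_{S̄ᶜ}‖₀ ≤ s̃ and ω_{λ_{K+1}}(x̂) ≤ δ'λ_{K+1}, and suppose x* is a minimizer of φ_{λ_tgt} with ‖x*_{S̄ᶜ}‖₀ ≤ s̃. Then φ_{λ_tgt}(x̂) − φ_{λ_tgt}(x*) ≤ η^{2(K+1)} · 4.5(1+γ)λ₀² s̄ / ρ₋(A, s̄+s̃), and ‖x̂ − x̄‖₂ ≤ η^{K+1} · 2λ₀√s̄ / ρ₋(A, s̄+s̃). -/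
open scoped BigOperators
open Matrix

noncomputable section

namespace PGH

/-- Euclidean dot product on `Fin n → ℝ`. -/
def dot {n : ℕ} (x y : Fin n → ℝ) : ℝ := ∑ i, x i * y i

/-- Squared Euclidean norm. -/
def sqnorm {n : ℕ} (x : Fin n → ℝ) : ℝ := ∑ i, (x i) ^ 2

/-- Euclidean (ℓ₂) norm. -/
noncomputable def l2 {n : ℕ} (x : Fin n → ℝ) : ℝ := Real.sqrt (sqnorm x)

/-- ℓ₁ norm. -/
def l1 {n : ℕ} (x : Fin n → ℝ) : ℝ := ∑ i, |x i|

/-- ℓ∞ norm (maximum absolute coordinate). -/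
noncomputable def linf {n : ℕ} (x : Fin n → ℝ) : ℝ := ⨆ i, |x i|

/-- Support of a vector. -/
def supp {n : ℕ} (x : Fin n → ℝ) : Finset (Fin n) := Finset.univ.filter (fun i => x i ≠ 0)

/-- Number of nonzero coordinates. -/
def l0 {n : ℕ} (x : Fin n → ℝ) : ℕ := (supp x).card

/-- Number of nonzero coordinates within the index set `S`
(i.e. `‖x_S‖₀` for the restriction of `x` to `S`). -/
def l0on {n : ℕ} (S : Finset (Fin n)) (x : Fin n → ℝ) : ℕ :=
  (S.filter (fun i => x i ≠ 0)).card

/-- ℓ₁ norm of the restriction of `x` to the index set `S`. -/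
def l1on {n : ℕ} (S : Finset (Fin n)) (x : Fin n → ℝ) : ℝ := ∑ i ∈ S, |x i|

/-- Gradient of `f(x) = (1/2)‖Ax - b‖₂²`, namely `Aᵀ(Ax - b)`. -/
def grad {m n : ℕ} (A : Matrix (Fin m) (Fin n) ℝ) (b : Fin m → ℝ) (x : Fin n → ℝ) :
    Fin n → ℝ :=
  Aᵀ.mulVec (A.mulVec x - b)

/-- Least-squares objective `f(x) = (1/2)‖Ax - b‖₂²`. -/
def fls {m n : ℕ} (A : Matrix (Fin m) (Fin n) ℝ) (b : Fin m → ℝ) (x : Fin n → ℝ) : ℝ :=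
  sqnorm (A.mulVec x - b) / 2

/-- ℓ₁-regularized least-squares objective `φ_λ(x) = f(x) + λ‖x‖₁`. -/
def phi {m n : ℕ} (A : Matrix (Fin m) (Fin n) ℝ) (b : Fin m → ℝ) (lam : ℝ)
    (x : Fin n → ℝ) : ℝ :=
  fls A b x + lam * l1 x

/-- Restricted maximal eigenvalue `ρ₊(A, s)`. -/
noncomputable def rhoPlus {m n : ℕ} (A : Matrix (Fin m) (Fin n) ℝ) (s : ℕ) : ℝ :=
  sSup {r | ∃ x : Fin n → ℝ, x ≠ 0 ∧ l0 x ≤ s ∧ r = sqnorm (A.mulVec x) / sqnorm x}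

/-- Restricted minimal eigenvalue `ρ₋(A, s)`. -/
noncomputable def rhoMinus {m n : ℕ} (A : Matrix (Fin m) (Fin n) ℝ) (s : ℕ) : ℝ :=
  sInf {r | ∃ x : Fin n → ℝ, x ≠ 0 ∧ l0 x ≤ s ∧ r = sqnorm (A.mulVec x) / sqnorm x}

/-- `ξ` is a subgradient of the ℓ₁ norm at `x`. -/
def IsSubgrad {n : ℕ} (x ξ : Fin n → ℝ) : Prop :=
  ∀ i, (x i ≠ 0 → ξ i = Real.sign (x i)) ∧ (x i = 0 → |ξ i| ≤ 1)

/-- Optimality residue `ω_λ(x) = min_{ξ ∈ ∂‖x‖₁} ‖Aᵀ(Ax−b) + λξ‖_∞`. -/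
noncomputable def omega {m n : ℕ} (A : Matrix (Fin m) (Fin n) ℝ) (b : Fin m → ℝ)
    (lam : ℝ) (x : Fin n → ℝ) : ℝ :=
  sInf {r | ∃ ξ : Fin n → ℝ, IsSubgrad x ξ ∧
    r = linf (fun i => grad A b x i + lam * ξ i)}

/-- The local model `ψ_{λ,L}(y; x)`. -/
def psi {m n : ℕ} (A : Matrix (Fin m) (Fin n) ℝ) (b : Fin m → ℝ) (lam L : ℝ)
    (y x : Fin n → ℝ) : ℝ :=
  fls A b y + dot (grad A b y) (x - y) + L / 2 * sqnorm (x - y) + lam * l1 x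

/-- The noise-domination condition
`λ ≥ max{4, (γ+1)/((1−δ')γ−(1+δ'))} ⬝ ‖Aᵀz‖_∞`. -/
def noiseCond {m n : ℕ} (A : Matrix (Fin m) (Fin n) ℝ) (z : Fin m → ℝ)
    (dp gam lam : ℝ) : Prop :=
  lam ≥ max 4 ((gam + 1) / ((1 - dp) * gam - (1 + dp))) * linf (Aᵀ.mulVec z)

lemma sqnorm_nonneg {n : ℕ} (x : Fin n → ℝ) : 0 ≤ sqnorm x :=
  Finset.sum_nonneg fun i _ => sq_nonneg _

lemma linf_nonneg {n : ℕ} (x : Fin n → ℝ) : 0 ≤ linf x :=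
  Real.iSup_nonneg fun i => abs_nonneg _

lemma abs_le_linf {n : ℕ} (x : Fin n → ℝ) (i : Fin n) : |x i| ≤ linf x :=
  le_ciSup (f := fun j => |x j|) (Set.Finite.bddAbove (Set.finite_range _)) i

lemma l1_nonneg {n : ℕ} (x : Fin n → ℝ) : 0 ≤ l1 x :=
  Finset.sum_nonneg fun i _ => abs_nonneg _

lemma l1on_nonneg {n : ℕ} (S : Finset (Fin n)) (x : Fin n → ℝ) : 0 ≤ l1on S x :=
  Finset.sum_nonneg fun i _ => abs_nonneg _

lemma abs_dot_le {n : ℕ} (v h : Fin n → ℝ) : |dot v h| ≤ linf v * l1 h := by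
  calc |dot v h| ≤ ∑ i, |v i * h i| := Finset.abs_sum_le_sum_abs _ _
    _ ≤ ∑ i, linf v * |h i| := by
        refine Finset.sum_le_sum fun i _ => ?_
        rw [abs_mul]
        exact mul_le_mul_of_nonneg_right (abs_le_linf v i) (abs_nonneg _)
    _ = linf v * l1 h := by rw [l1, Finset.mul_sum]

lemma dot_add_smul {n : ℕ} (g ξ h : Fin n → ℝ) (lam : ℝ) :
    dot (fun i => g i + lam * ξ i) h = dot g h + lam * dot ξ h := by
  simp only [dot, Finset.mul_sum, ← Finset.sum_add_distrib]
  exact Finset.sum_congr rfl fun i _ => by ring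

lemma l1_split {n : ℕ} (S : Finset (Fin n)) (x : Fin n → ℝ) :
    l1 x = l1on S x + l1on Sᶜ x := by
  rw [l1, l1on, l1on, Finset.sum_add_sum_compl]

lemma dot_transpose {m n : ℕ} (A : Matrix (Fin m) (Fin n) ℝ) (w : Fin m → ℝ) (h : Fin n → ℝ) :
    dot (Aᵀ.mulVec w) h = dot w (A.mulVec h) := by
  simp only [dot, Matrix.mulVec, dotProduct, Matrix.transpose_apply,
    Finset.sum_mul, Finset.mul_sum]
  rw [Finset.sum_comm]
  exact Finset.sum_congr rfl fun i _ => Finset.sum_congr rfl fun j _ => by ring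

lemma sqnorm_add {n : ℕ} (p q : Fin n → ℝ) :
    sqnorm (p + q) = sqnorm p + 2 * dot p q + sqnorm q := by
  simp only [sqnorm, dot, Pi.add_apply, Finset.mul_sum, ← Finset.sum_add_distrib]
  exact Finset.sum_congr rfl fun i _ => by ring

lemma fls_expand {m n : ℕ} (A : Matrix (Fin m) (Fin n) ℝ) (b : Fin m → ℝ) (u v : Fin n → ℝ) :
    fls A b u = fls A b v + dot (grad A b v) (u - v) + sqnorm (A.mulVec (u - v)) / 2 := by
  have key : A.mulVec u - b = (A.mulVec v - b) + A.mulVec (u - v) := by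
    rw [Matrix.mulVec_sub]; abel
  rw [fls, key, sqnorm_add, grad, dot_transpose, fls]
  ring

lemma subgrad_ineq {n : ℕ} (x ξ : Fin n → ℝ)
    (hξ : ∀ i, (x i ≠ 0 → ξ i = Real.sign (x i)) ∧ (x i = 0 → |ξ i| ≤ 1)) (u : Fin n → ℝ) :
    l1 x + dot ξ (u - x) ≤ l1 u := by
  have : ∀ i ∈ Finset.univ, |x i| + ξ i * ((u - x) i) ≤ |u i| := by
    intro i _
    rcases eq_or_ne (x i) 0 with h0 | h0
    · have h1 := (hξ i).2 h0
      have : ξ i * u i ≤ |u i| := by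
        calc ξ i * u i ≤ |ξ i * u i| := le_abs_self _
          _ = |ξ i| * |u i| := abs_mul _ _
          _ ≤ 1 * |u i| := mul_le_mul_of_nonneg_right h1 (abs_nonneg _)
          _ = |u i| := one_mul _
      simp [h0, Pi.sub_apply]
      linarith
    · have h1 := (hξ i).1 h0
      rcases lt_trichotomy (x i) 0 with hlt | heq | hgt
      · rw [h1, Real.sign_of_neg hlt]
        simp [Pi.sub_apply, abs_of_neg hlt]
        have : -(u i) ≤ |u i| := neg_le_abs _
        linarith
      · exact absurd heq h0
      · rw [h1, Real.sign_of_pos hgt]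
        simp [Pi.sub_apply, abs_of_pos hgt]
        have : u i ≤ |u i| := le_abs_self _
        linarith
  calc l1 x + dot ξ (u - x) = ∑ i, (|x i| + ξ i * ((u - x) i)) := by
        simp [l1, dot, Finset.sum_add_distrib]
    _ ≤ ∑ i, |u i| := Finset.sum_le_sum this
    _ = l1 u := rfl

lemma sqnorm_pos {n : ℕ} {x : Fin n → ℝ} (hx : x ≠ 0) : 0 < sqnorm x := by
  have : ∃ i, x i ≠ 0 := by
    by_contra hc
    push_neg at hc
    exact hx (funext fun i => hc i)
  obtain ⟨i, hi⟩ := this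
  have h1 : (0:ℝ) < (x i)^2 := by positivity
  have h2 : (x i)^2 ≤ sqnorm x :=
    Finset.single_le_sum (fun j _ => sq_nonneg (x j)) (Finset.mem_univ i)
  linarith

lemma rho_le {m n : ℕ} (A : Matrix (Fin m) (Fin n) ℝ) (s : ℕ) (x : Fin n → ℝ)
    (hx : l0 x ≤ s) : rhoMinus A s * sqnorm x ≤ sqnorm (A.mulVec x) := by
  rcases eq_or_ne x 0 with rfl | hx0
  · simp [sqnorm]
  · have hmem : sqnorm (A.mulVec x) / sqnorm x ∈
        {r | ∃ y : Fin n → ℝ, y ≠ 0 ∧ l0 y ≤ s ∧ r = sqnorm (A.mulVec y) / sqnorm y} :=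
      ⟨x, hx0, hx, rfl⟩
    have hbdd : BddBelow {r | ∃ y : Fin n → ℝ, y ≠ 0 ∧ l0 y ≤ s ∧ r = sqnorm (A.mulVec y) / sqnorm y} := by
      refine ⟨0, fun r hr => ?_⟩
      obtain ⟨y, _, _, rfl⟩ := hr
      exact div_nonneg (sqnorm_nonneg _) (sqnorm_nonneg _)
    have h1 : rhoMinus A s ≤ sqnorm (A.mulVec x) / sqnorm x := csInf_le hbdd hmem
    have h2 : 0 < sqnorm x := sqnorm_pos hx0
    calc rhoMinus A s * sqnorm x ≤ (sqnorm (A.mulVec x) / sqnorm x) * sqnorm x :=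
          mul_le_mul_of_nonneg_right h1 (le_of_lt h2)
      _ = sqnorm (A.mulVec x) := div_mul_cancel₀ _ (ne_of_gt h2)

lemma l1on_le_sqrt {n : ℕ} (S : Finset (Fin n)) (x : Fin n → ℝ) :
    l1on S x ≤ Real.sqrt S.card * l2 x := by
  have h1 : (l1on S x)^2 ≤ (S.card : ℝ) * sqnorm x := by
    calc (l1on S x)^2 ≤ (S.card : ℝ) * ∑ i ∈ S, |x i|^2 := by
          exact_mod_cast sq_sum_le_card_mul_sum_sq (s := S) (f := fun i => |x i|)
      _ ≤ (S.card : ℝ) * sqnorm x := by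
          refine mul_le_mul_of_nonneg_left ?_ (Nat.cast_nonneg _)
          rw [sqnorm]
          refine Finset.sum_le_sum_of_subset_of_nonneg (Finset.subset_univ S) (fun i _ _ => sq_nonneg _) |>.trans_eq' ?_
          exact Finset.sum_congr rfl fun i _ => by rw [sq_abs]
  have h2 : 0 ≤ l1on S x := l1on_nonneg S x
  have := Real.sqrt_le_sqrt (le_of_eq rfl : (l1on S x)^2 ≤ (l1on S x)^2)
  calc l1on S x = Real.sqrt ((l1on S x)^2) := (Real.sqrt_sq h2).symm
    _ ≤ Real.sqrt ((S.card : ℝ) * sqnorm x) := Real.sqrt_le_sqrt h1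
    _ = Real.sqrt S.card * l2 x := by rw [Real.sqrt_mul (Nat.cast_nonneg _), l2]

lemma l0_diff_le {n : ℕ} (xbar y : Fin n → ℝ) (st : ℕ)
    (hsp : l0on (supp xbar)ᶜ y ≤ st) : l0 (y - xbar) ≤ (supp xbar).card + st := by
  classical
  have hsub : supp (y - xbar) ⊆ supp xbar ∪ (supp xbar)ᶜ.filter (fun i => y i ≠ 0) := by
    intro i hi
    simp only [supp, Finset.mem_filter, Finset.mem_univ, true_and, Pi.sub_apply] at hi
    by_cases hS : i ∈ supp xbar
    · exact Finset.mem_union_left _ hS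
    · refine Finset.mem_union_right _ (Finset.mem_filter.mpr ⟨Finset.mem_compl.mpr hS, ?_⟩)
      have hx0 : xbar i = 0 := by
        by_contra hc
        exact hS (Finset.mem_filter.mpr ⟨Finset.mem_univ i, hc⟩)
      intro hy
      exact hi (by rw [hy, hx0]; ring)
  calc l0 (y - xbar) ≤ (supp xbar ∪ (supp xbar)ᶜ.filter (fun i => y i ≠ 0)).card :=
        Finset.card_le_card hsub
    _ ≤ (supp xbar).card + ((supp xbar)ᶜ.filter (fun i => y i ≠ 0)).card :=
        Finset.card_union_le _ _
    _ ≤ (supp xbar).card + st := by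
        have : ((supp xbar)ᶜ.filter (fun i => y i ≠ 0)).card ≤ st := hsp
        omega

lemma l1_sub_le {n : ℕ} (u v : Fin n → ℝ) : l1 u - l1 v ≤ l1 (u - v) := by
  have : ∀ i ∈ Finset.univ, |u i| - |v i| ≤ |(u - v) i| := fun i _ => by
    simpa [Pi.sub_apply] using abs_sub_abs_le_abs_sub (u i) (v i)
  have h := Finset.sum_le_sum this
  simp only [Finset.sum_sub_distrib] at h
  simpa [l1] using h

lemma l1_key {n : ℕ} (xbar y : Fin n → ℝ) :
    l1 xbar - l1 y ≤ l1on (supp xbar) (y - xbar) - l1on (supp xbar)ᶜ (y - xbar) := by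
  classical
  have e1 : l1 xbar - l1 y = (∑ i ∈ supp xbar, (|xbar i| - |y i|))
      + (∑ i ∈ (supp xbar)ᶜ, (|xbar i| - |y i|)) := by
    rw [Finset.sum_add_sum_compl, l1, l1, Finset.sum_sub_distrib]
  rw [e1, l1on, l1on]
  have h1 : ∑ i ∈ supp xbar, (|xbar i| - |y i|) ≤ ∑ i ∈ supp xbar, |(y - xbar) i| := by
    refine Finset.sum_le_sum fun i _ => ?_
    have := abs_sub_abs_le_abs_sub (xbar i) (y i)
    calc |xbar i| - |y i| ≤ |xbar i - y i| := abs_sub_abs_le_abs_sub _ _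
      _ = |(y - xbar) i| := by rw [Pi.sub_apply, abs_sub_comm]
  have h2 : ∑ i ∈ (supp xbar)ᶜ, (|xbar i| - |y i|) = - ∑ i ∈ (supp xbar)ᶜ, |(y - xbar) i| := by
    rw [← Finset.sum_neg_distrib]
    refine Finset.sum_congr rfl fun i hi => ?_
    have hx0 : xbar i = 0 := by
      by_contra hc
      exact (Finset.mem_compl.mp hi) (Finset.mem_filter.mpr ⟨Finset.mem_univ i, hc⟩)
    simp [Pi.sub_apply, hx0]
  rw [h2]; linarith

lemma omega_attained {m n : ℕ} (A : Matrix (Fin m) (Fin n) ℝ) (b : Fin m → ℝ)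
    {lam : ℝ} (hlam : 0 < lam) (x : Fin n → ℝ) :
    ∃ ξ : Fin n → ℝ, IsSubgrad x ξ ∧
      linf (fun i => grad A b x i + lam * ξ i) ≤ omega A b lam x := by
  classical
  refine ⟨fun i => if x i = 0 then max (-1) (min 1 (-(grad A b x i)/lam)) else Real.sign (x i),
    ?_, ?_⟩
  · intro i
    constructor
    · intro hne; simp [hne]
    · intro h0
      simp only [h0, if_pos rfl]
      rw [abs_le]
      exact ⟨le_max_left _ _, max_le (by norm_num) (min_le_left _ _)⟩
  · set ξ0 : Fin n → ℝ :=
      fun i => if x i = 0 then max (-1) (min 1 (-(grad A b x i)/lam)) else Real.sign (x i)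
      with hξ0
    have hsub0 : IsSubgrad x ξ0 := by
      intro i
      constructor
      · intro hne; simp [hξ0, hne]
      · intro h0
        simp only [hξ0, h0, if_pos rfl]
        rw [abs_le]
        exact ⟨le_max_left _ _, max_le (by norm_num) (min_le_left _ _)⟩
    have hpt : ∀ ξ : Fin n → ℝ, IsSubgrad x ξ → ∀ i,
        |grad A b x i + lam * ξ0 i| ≤ |grad A b x i + lam * ξ i| := by
      intro ξ hξ i
      set g := grad A b x i with hgdef
      rcases eq_or_ne (x i) 0 with h0 | h0
      · have ht : |ξ i| ≤ 1 := (hξ i).2 h0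
        rw [abs_le] at ht
        obtain ⟨ht1, ht2⟩ := ht
        have hv : ξ0 i = max (-1) (min 1 (-g/lam)) := by simp [hξ0, h0, hgdef]
        rw [hv]
        set t := ξ i
        rcases le_or_gt (-g/lam) (-1) with hc1 | hc1
        · have hcl : max (-1) (min 1 (-g/lam)) = -1 :=
            max_eq_left (le_trans (min_le_right _ _) hc1)
          rw [hcl]
          have hgi : lam ≤ g := by
            rw [div_le_iff₀ hlam] at hc1
            linarith
          rw [← Real.sqrt_sq_eq_abs, ← Real.sqrt_sq_eq_abs]
          refine Real.sqrt_le_sqrt ?_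
          have h2 : (0:ℝ) ≤ 2*g + lam*(t-1) := by
            nlinarith [mul_nonneg hlam.le (by linarith : (0:ℝ) ≤ 1 + t)]
          nlinarith [mul_nonneg hlam.le (mul_nonneg (by linarith : (0:ℝ) ≤ t + 1) h2)]
        · rcases le_or_gt 1 (-g/lam) with hc2 | hc2
          · have hcl : max (-1) (min 1 (-g/lam)) = 1 := by
              rw [min_eq_left hc2, max_eq_right (by norm_num)]
            rw [hcl]
            have hgi : g ≤ -lam := by
              rw [le_div_iff₀ hlam] at hc2
              linarith
            rw [← Real.sqrt_sq_eq_abs, ← Real.sqrt_sq_eq_abs]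
            refine Real.sqrt_le_sqrt ?_
            have h2 : (0:ℝ) ≤ -(2*g) - lam*(t+1) := by
              nlinarith [mul_nonneg hlam.le (by linarith : (0:ℝ) ≤ 1 - t)]
            nlinarith [mul_nonneg hlam.le (mul_nonneg (by linarith : (0:ℝ) ≤ 1 - t) h2)]
          · have hcl : max (-1) (min 1 (-g/lam)) = -g/lam := by
              rw [min_eq_right (le_of_lt hc2), max_eq_right (le_of_lt hc1)]
            rw [hcl]
            have hz : g + lam * (-g/lam) = 0 := by
              field_simp
              ring
            rw [hz]
            simp [abs_nonneg]
      · rw [(hξ i).1 h0, show ξ0 i = Real.sign (x i) by simp [hξ0, h0]]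
    refine le_csInf ⟨linf (fun i => grad A b x i + lam * ξ0 i), ξ0, hsub0, rfl⟩ ?_
    rintro r ⟨ξ, hξ, rfl⟩
    refine Real.iSup_le (fun i => ?_) (linf_nonneg _)
    exact le_trans (hpt ξ hξ i) (abs_le_linf (fun j => grad A b x j + lam * ξ j) i)

lemma dot_neg_left {n : ℕ} (w v : Fin n → ℝ) : dot (-w) v = - dot w v := by
  simp [dot, Finset.sum_neg_distrib]

lemma sqnorm_neg {n : ℕ} (v : Fin n → ℝ) : sqnorm (-v) = sqnorm v := by
  simp [sqnorm]

lemma l1_sub_comm {n : ℕ} (u v : Fin n → ℝ) : l1 (u - v) = l1 (v - u) := by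
  simp [l1, abs_sub_comm]

lemma grad_bar {m n : ℕ} (A : Matrix (Fin m) (Fin n) ℝ) (b : Fin m → ℝ)
    (xbar : Fin n → ℝ) (z : Fin m → ℝ) (hb : b = A.mulVec xbar + z) :
    grad A b xbar = -(Aᵀ.mulVec z) := by
  rw [grad, hb]
  have h1 : A.mulVec xbar - (A.mulVec xbar + z) = -z := by
    funext i; simp
  rw [h1, Matrix.mulVec_neg]

set_option maxHeartbeats 1000000 in
theorem stmt11 {m n : ℕ} (A : Matrix (Fin m) (Fin n) ℝ) (b : Fin m → ℝ)
    (xbar : Fin n → ℝ) (z : Fin m → ℝ) (hb : b = A.mulVec xbar + z)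
    (dp gam : ℝ) (hdp0 : 0 < dp) (hdp1 : dp < 1)
    (hgam : gam > (1 + dp) / (1 - dp))
    (st : ℕ) (hst : 1 ≤ st)
    (hrho : 0 < rhoMinus A ((supp xbar).card + st))
    (lam0 : ℝ) (hlam0 : 0 < lam0) (eta : ℝ) (heta0 : 0 < eta) (heta1 : eta < 1)
    (K : ℕ) (lamtgt : ℝ) (hlt : 0 < lamtgt) (hle : lamtgt ≤ eta ^ (K + 1) * lam0)
    (hnoise1 : noiseCond A z dp gam (eta ^ (K + 1) * lam0))
    (hnoise2 : noiseCond A z dp gam lamtgt)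
    (xhat : Fin n → ℝ) (hsp : l0on (supp xbar)ᶜ xhat ≤ st)
    (homega : omega A b (eta ^ (K + 1) * lam0) xhat ≤ dp * (eta ^ (K + 1) * lam0))
    (xstar : Fin n → ℝ) (hmin : ∀ u, phi A b lamtgt xstar ≤ phi A b lamtgt u)
    (hspstar : l0on (supp xbar)ᶜ xstar ≤ st) :
    phi A b lamtgt xhat - phi A b lamtgt xstar ≤
      eta ^ (2 * (K + 1)) * (4.5 * (1 + gam) * lam0 ^ 2 * ((supp xbar).card : ℝ)) /
        rhoMinus A ((supp xbar).card + st) ∧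
    l2 (xhat - xbar) ≤
      eta ^ (K + 1) * (2 * lam0 * Real.sqrt ((supp xbar).card : ℝ)) /
        rhoMinus A ((supp xbar).card + st) := by
  classical
  set lam : ℝ := eta ^ (K + 1) * lam0 with hlamdef
  have hlam : 0 < lam := mul_pos (pow_pos heta0 _) hlam0
  set ρ : ℝ := rhoMinus A ((supp xbar).card + st) with hρdef
  set ν : ℝ := linf (Aᵀ.mulVec z) with hνdef
  have hν0 : 0 ≤ ν := linf_nonneg _
  set sbar : ℝ := ((supp xbar).card : ℝ) with hsbardef
  have hsbar0 : 0 ≤ sbar := Nat.cast_nonneg _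
  set R : ℝ := Real.sqrt sbar with hRdef
  have hR0 : 0 ≤ R := Real.sqrt_nonneg _
  have hR2 : R ^ 2 = sbar := Real.sq_sqrt hsbar0
  have hdp' : 0 < 1 - dp := by linarith
  have hD : 0 < (1 - dp) * gam - (1 + dp) := by
    rw [gt_iff_lt, div_lt_iff₀ hdp'] at hgam
    linarith
  have hgam1 : 1 < gam := by nlinarith
  have hmaxν : ∀ lm : ℝ, noiseCond A z dp gam lm → 4 * ν ≤ lm ∧ (gam + 1) * ν ≤ lm * ((1 - dp) * gam - (1 + dp)) := by
    intro lm hn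
    rw [noiseCond] at hn
    constructor
    · calc 4 * ν ≤ max 4 ((gam + 1) / ((1 - dp) * gam - (1 + dp))) * ν :=
            mul_le_mul_of_nonneg_right (le_max_left _ _) hν0
        _ ≤ lm := hn
    · have h1 : (gam + 1) / ((1 - dp) * gam - (1 + dp)) * ν ≤ lm :=
        le_trans (mul_le_mul_of_nonneg_right (le_max_right _ _) hν0) hn
      rw [div_mul_eq_mul_div, div_le_iff₀ hD] at h1
      linarith
  obtain ⟨hν4lam, hνclam⟩ := hmaxν lam hnoise1
  obtain ⟨hν4t, _⟩ := hmaxν lamtgt hnoise2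
  obtain ⟨ξ, hξsub, hξle⟩ := omega_attained A b hlam xhat
  have hξb : linf (fun i => grad A b xhat i + lam * ξ i) ≤ dp * lam := le_trans hξle homega
  set h : Fin n → ℝ := xhat - xbar with hhdef
  set d : Fin n → ℝ := xstar - xbar with hddef
  set a : ℝ := l1on (supp xbar) h with hadef
  set c : ℝ := l1on (supp xbar)ᶜ h with hcdef
  set a' : ℝ := l1on (supp xbar) d with ha'def
  set c' : ℝ := l1on (supp xbar)ᶜ d with hc'def
  have ha0 : 0 ≤ a := l1on_nonneg _ _
  have hc0 : 0 ≤ c := l1on_nonneg _ _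
  have ha'0 : 0 ≤ a' := l1on_nonneg _ _
  have hc'0 : 0 ≤ c' := l1on_nonneg _ _
  have hl1h : l1 h = a + c := l1_split _ _
  have hl1d : l1 d = a' + c' := l1_split _ _
  set AH : ℝ := sqnorm (A.mulVec h) with hAHdef
  set AD : ℝ := sqnorm (A.mulVec d) with hADdef
  have hAH0 : 0 ≤ AH := sqnorm_nonneg _
  have hgb : grad A b xbar = -(Aᵀ.mulVec z) := grad_bar A b xbar z hb
  have hdotz : ∀ v : Fin n → ℝ, |dot (Aᵀ.mulVec z) v| ≤ ν * l1 v := fun v => abs_dot_le _ v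
  have hid : ∀ mu : ℝ, phi A b mu xhat - phi A b mu xbar
      = dot (grad A b xbar) h + AH / 2 + mu * (l1 xhat - l1 xbar) := by
    intro mu
    have hfe := fls_expand A b xhat xbar
    rw [← hhdef, ← hAHdef] at hfe
    rw [phi, phi]
    linarith only [hfe]
  have hidd : ∀ mu : ℝ, phi A b mu xstar - phi A b mu xbar
      = dot (grad A b xbar) d + AD / 2 + mu * (l1 xstar - l1 xbar) := by
    intro mu
    have hfe := fls_expand A b xstar xbar
    rw [← hddef, ← hADdef] at hfe
    rw [phi, phi]
    linarith only [hfe]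
  -- Step (I): approximate optimality of xhat at level lam
  have hstepI : phi A b lam xhat - phi A b lam xbar ≤ dp * lam * (a + c) - AH / 2 := by
    have hexp : fls A b xbar = fls A b xhat + dot (grad A b xhat) (xbar - xhat)
        + sqnorm (A.mulVec (xbar - xhat)) / 2 := fls_expand A b xbar xhat
    have hsg : l1 xhat + dot ξ (xbar - xhat) ≤ l1 xbar := subgrad_ineq xhat ξ hξsub xbar
    have hAHsym : sqnorm (A.mulVec (xbar - xhat)) = AH := by
      rw [show xbar - xhat = -(xhat - xbar) from (neg_sub _ _).symm, Matrix.mulVec_neg,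
        sqnorm_neg, hAHdef, hhdef]
    have hcombine : dot (fun i => grad A b xhat i + lam * ξ i) (xbar - xhat)
        = dot (grad A b xhat) (xbar - xhat) + lam * dot ξ (xbar - xhat) :=
      dot_add_smul _ _ _ _
    have hlow : -(dp * lam) * l1 (xbar - xhat) ≤ dot (fun i => grad A b xhat i + lam * ξ i) (xbar - xhat) := by
      have h1 := abs_dot_le (fun i => grad A b xhat i + lam * ξ i) (xbar - xhat)
      have h2 : linf (fun i => grad A b xhat i + lam * ξ i) * l1 (xbar - xhat)
          ≤ dp * lam * l1 (xbar - xhat) :=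
        mul_le_mul_of_nonneg_right hξb (l1_nonneg _)
      have h3 := neg_abs_le (dot (fun i => grad A b xhat i + lam * ξ i) (xbar - xhat))
      linarith
    have hl1sym : l1 (xbar - xhat) = a + c := by
      rw [l1_sub_comm, ← hhdef, hl1h]
    rw [phi, phi]
    rw [hl1sym] at hlow
    rw [hAHsym] at hexp
    rw [hcombine] at hlow
    linarith only [hexp, hlow, mul_le_mul_of_nonneg_left hsg hlam.le]
  -- key quadratic bound
  have hK1 : AH ≤ (dp * lam + ν + lam) * a + (dp * lam + ν - lam) * c := by
    have hII := hid lam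
    have hdz := hdotz h
    have hdg : dot (grad A b xbar) h = - dot (Aᵀ.mulVec z) h := by
      rw [hgb, dot_neg_left]
    have hkey : l1 xbar - l1 xhat ≤ a - c := by
      have hlk := l1_key xbar xhat
      rw [← hhdef] at hlk
      rw [hadef, hcdef]
      linarith
    have h5 : lam * (l1 xbar - l1 xhat) ≤ lam * (a - c) :=
      mul_le_mul_of_nonneg_left hkey hlam.le
    rw [hl1h] at hdz
    have h6 := abs_le.mp hdz
    rw [hdg] at hII
    linarith only [hstepI, h5, h6.2, hII]
  -- coefficient bounds
  have hcoefp : (gam + 1) * (dp * lam + ν + lam) ≤ 2 * lam * gam := by linarith only [hνclam]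
  have hcoefm : (gam + 1) * (dp * lam + ν - lam) ≤ -(2 * lam) := by linarith only [hνclam]
  have e1 : ((gam + 1) * (dp * lam + ν + lam)) * a ≤ (2 * lam * gam) * a :=
    mul_le_mul_of_nonneg_right hcoefp ha0
  have e2 : ((gam + 1) * (dp * lam + ν - lam)) * c ≤ (-(2 * lam)) * c :=
    mul_le_mul_of_nonneg_right hcoefm hc0
  have emul : (gam + 1) * AH ≤ (gam + 1) * ((dp * lam + ν + lam) * a + (dp * lam + ν - lam) * c) :=
    mul_le_mul_of_nonneg_left hK1 (by linarith)
  have hcone : c ≤ gam * a := by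
    have hlc : lam * c ≤ lam * (gam * a) := by
      linarith only [emul, e1, e2, mul_nonneg (show (0:ℝ) ≤ gam + 1 by linarith only [hgam1]) hAH0]
    exact le_of_mul_le_mul_left hlc hlam
  have hAH2 : AH ≤ 2 * lam * a := by
    have e4 : (gam + 1) * AH ≤ (gam + 1) * (2 * lam * a) := by
      linarith only [emul, e1, e2, mul_nonneg hlam.le hc0, mul_nonneg hlam.le ha0]
    exact le_of_mul_le_mul_left e4 (by linarith)
  -- restricted eigenvalue
  have hl0h : l0 h ≤ (supp xbar).card + st := l0_diff_le xbar xhat st hsp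
  have hl0d : l0 d ≤ (supp xbar).card + st := l0_diff_le xbar xstar st hspstar
  have hρh : ρ * sqnorm h ≤ AH := rho_le A _ h hl0h
  have hρd : ρ * sqnorm d ≤ AD := rho_le A _ d hl0d
  set H2 : ℝ := l2 h with hH2def
  set D2 : ℝ := l2 d with hD2def
  have hH20 : 0 ≤ H2 := Real.sqrt_nonneg _
  have hD20 : 0 ≤ D2 := Real.sqrt_nonneg _
  have hH2sq : H2 ^ 2 = sqnorm h := Real.sq_sqrt (sqnorm_nonneg _)
  have hD2sq : D2 ^ 2 = sqnorm d := Real.sq_sqrt (sqnorm_nonneg _)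
  have haH : a ≤ R * H2 := l1on_le_sqrt _ _
  have ha'D : a' ≤ R * D2 := l1on_le_sqrt _ _
  -- l2 bound on h
  have hH2bound : H2 ≤ 2 * lam * R / ρ := by
    have hq : ρ * H2 ^ 2 ≤ 2 * lam * (R * H2) := by
      have h7 : 2 * lam * a ≤ 2 * lam * (R * H2) :=
        mul_le_mul_of_nonneg_left haH (by linarith)
      rw [hH2sq]
      linarith only [hρh, hAH2, h7]
    rcases eq_or_lt_of_le hH20 with heq | hpos
    · rw [← heq]
      positivity
    · rw [le_div_iff₀ hrho]
      nlinarith only [hq, hpos]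
  have hconc2 : l2 (xhat - xbar) ≤ eta ^ (K + 1) * (2 * lam0 * R) / ρ := by
    have he : eta ^ (K + 1) * (2 * lam0 * R) / ρ = 2 * lam * R / ρ := by
      rw [hlamdef]; ring
    rw [he, ← hhdef, ← hH2def]
    exact hH2bound
  have habound : a ≤ 2 * lam * sbar / ρ := by
    calc a ≤ R * H2 := haH
      _ ≤ R * (2 * lam * R / ρ) := mul_le_mul_of_nonneg_left hH2bound hR0
      _ = 2 * lam * R ^ 2 / ρ := by ring
      _ = 2 * lam * sbar / ρ := by rw [hR2]
  -- T1 bound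
  have hT1 : phi A b lamtgt xhat - phi A b lamtgt xbar
      ≤ ν * (a + c) + lam * a + lamtgt * (a + c) := by
    have hII := hid lamtgt
    have hdz := hdotz h
    have hdg : dot (grad A b xbar) h = - dot (Aᵀ.mulVec z) h := by
      rw [hgb, dot_neg_left]
    have h6 := abs_le.mp hdz
    have h7 : l1 xhat - l1 xbar ≤ l1 h := by
      have hls := l1_sub_le xhat xbar
      rw [← hhdef] at hls
      exact hls
    have h8 : lamtgt * (l1 xhat - l1 xbar) ≤ lamtgt * (a + c) := by
      rw [← hl1h]
      exact mul_le_mul_of_nonneg_left h7 hlt.le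
    rw [hl1h] at h6
    rw [hdg] at hII
    linarith only [hII, hAH2, h6.1, h8]
  -- T2 bound
  have hT2 : phi A b lamtgt xbar - phi A b lamtgt xstar ≤ 25/32 * lamtgt ^ 2 * sbar / ρ := by
    have hII := hidd lamtgt
    have hdz := hdotz d
    have hdg : dot (grad A b xbar) d = - dot (Aᵀ.mulVec z) d := by
      rw [hgb, dot_neg_left]
    have hkey : l1 xbar - l1 xstar ≤ a' - c' := by
      have hlk := l1_key xbar xstar
      rw [← hddef] at hlk
      rw [ha'def, hc'def]
      linarith
    have h5 : lamtgt * (l1 xbar - l1 xstar) ≤ lamtgt * (a' - c') :=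
      mul_le_mul_of_nonneg_left hkey hlt.le
    rw [hl1d] at hdz
    have h6 := abs_le.mp hdz
    rw [hdg] at hII
    have hstep : phi A b lamtgt xbar - phi A b lamtgt xstar
        ≤ 5/4 * lamtgt * a' - AD / 2 := by
      linarith only [hII, h6.2, h5,
        mul_le_mul_of_nonneg_right (show ν ≤ lamtgt/4 by linarith only [hν4t]) ha'0,
        mul_le_mul_of_nonneg_right (show ν ≤ lamtgt by linarith only [hν4t, hν0]) hc'0]
    have hADlow : ρ * D2 ^ 2 ≤ AD := by rw [hD2sq]; exact hρd
    have h9 : 5/4 * lamtgt * a' ≤ 5/4 * lamtgt * (R * D2) :=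
      mul_le_mul_of_nonneg_left ha'D (by linarith)
    have hquad : 5/4 * lamtgt * a' - AD / 2 ≤ 25/32 * lamtgt ^ 2 * sbar / ρ := by
      rw [← hR2, le_div_iff₀ hrho]
      linarith only [sq_nonneg (5/4 * lamtgt * R - ρ * D2),
        mul_le_mul_of_nonneg_right h9 hrho.le,
        mul_le_mul_of_nonneg_right hADlow hrho.le]
    linarith
  -- assemble conclusion 1
  have hlamt2 : lamtgt ^ 2 ≤ lam ^ 2 := by nlinarith only [hlt, hle]
  have hQ0 : 0 ≤ lam ^ 2 * sbar / ρ := by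
    apply div_nonneg _ hrho.le
    positivity
  have hconc1 : phi A b lamtgt xhat - phi A b lamtgt xstar ≤
      eta ^ (2 * (K + 1)) * (4.5 * (1 + gam) * lam0 ^ 2 * sbar) / ρ := by
    have hRHS : eta ^ (2 * (K + 1)) * (4.5 * (1 + gam) * lam0 ^ 2 * sbar) / ρ
        = 4.5 * (1 + gam) * (lam ^ 2 * sbar / ρ) := by
      rw [hlamdef, show 2 * (K + 1) = (K + 1) * 2 from Nat.mul_comm _ _, pow_mul]
      ring
    rw [hRHS]
    have hac : a + c ≤ (1 + gam) * a := by linarith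
    have hνt : ν + lamtgt ≤ 5/4 * lam := by linarith
    have hT1b : ν * (a + c) + lamtgt * (a + c) ≤ (5/4 * lam) * ((1 + gam) * a) := by
      have hmm : (ν + lamtgt) * (a + c) ≤ (5/4 * lam) * ((1 + gam) * a) :=
        mul_le_mul hνt hac (by linarith) (by linarith)
      linarith only [hmm]
    have hga0 : (0:ℝ) ≤ 1 + gam := by linarith
    have hT1c : (5/4 * lam) * ((1 + gam) * a) ≤ (5/4 * lam) * ((1 + gam) * (2 * lam * sbar / ρ)) :=
      mul_le_mul_of_nonneg_left (mul_le_mul_of_nonneg_left habound hga0) (by linarith)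
    have hT1d : lam * a ≤ lam * (2 * lam * sbar / ρ) :=
      mul_le_mul_of_nonneg_left habound hlam.le
    have hT2b : 25/32 * lamtgt ^ 2 * sbar / ρ ≤ 25/32 * (lam ^ 2 * sbar / ρ) := by
      have he : 25/32 * (lam ^ 2 * sbar / ρ) = 25/32 * lam ^ 2 * sbar / ρ := by ring
      rw [he, div_le_div_iff₀ hrho hrho]
      linarith only [mul_le_mul_of_nonneg_right hlamt2 (mul_nonneg hsbar0 hrho.le)]
    have hfin : (5/4 * lam) * ((1 + gam) * (2 * lam * sbar / ρ)) + lam * (2 * lam * sbar / ρ)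
        + 25/32 * (lam ^ 2 * sbar / ρ) ≤ 4.5 * (1 + gam) * (lam ^ 2 * sbar / ρ) := by
      have hslack : 0 ≤ (2 * gam - 25/32) * (lam ^ 2 * sbar / ρ) :=
        mul_nonneg (by linarith) hQ0
      ring_nf
      ring_nf at hslack
      linarith only [hslack]
    linarith only [hT1, hT2, hT1b, hT1c, hT1d, hT2b, hfin]
  exact ⟨hconc1, hconc2⟩

end PGH
end
end

section
/- Let λ > 0. The zero vector minimizes φ_λ(x) = (1/2)‖Ax − b‖₂² + λ‖x‖₁ over ℝⁿ if and only if λ ≥ ‖Aᵀb‖_∞. -/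
open scoped BigOperators
open Matrix

noncomputable section

namespace PGH

lemma phi_expand {m n : ℕ} (A : Matrix (Fin m) (Fin n) ℝ) (b : Fin m → ℝ)
    (lam : ℝ) (x : Fin n → ℝ) :
    phi A b lam x = phi A b lam 0 +
      (sqnorm (A.mulVec x) / 2 - dot (Aᵀ.mulVec b) x + lam * l1 x) := by
  have hdot : dot (Aᵀ.mulVec b) x = ∑ j, A.mulVec x j * b j := by
    simp only [dot, Matrix.mulVec, dotProduct, Matrix.transpose_apply,
      Finset.sum_mul, Finset.mul_sum]
    rw [Finset.sum_comm]
    apply Finset.sum_congr rfl; intro j _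
    apply Finset.sum_congr rfl; intro i _; ring
  simp only [phi, fls, sqnorm, l1, Matrix.mulVec_zero, hdot, Pi.sub_apply,
    Pi.zero_apply, zero_sub, abs_zero, Finset.sum_const_zero, mul_zero, add_zero,
    neg_sq]
  have : ∑ j, (A.mulVec x j - b j) ^ 2
      = ∑ j, ((A.mulVec x j) ^ 2 - 2 * (A.mulVec x j * b j) + b j ^ 2) := by
    apply Finset.sum_congr rfl; intro j _; ring
  rw [this, Finset.sum_add_distrib, Finset.sum_sub_distrib, ← Finset.mul_sum]
  ring

theorem stmt14 {m n : ℕ} (A : Matrix (Fin m) (Fin n) ℝ) (b : Fin m → ℝ)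
    (lam : ℝ) (hlam : 0 < lam) :
    (∀ x : Fin n → ℝ, phi A b lam 0 ≤ phi A b lam x) ↔ linf (Aᵀ.mulVec b) ≤ lam := by
  set g := Aᵀ.mulVec b with hg
  constructor
  · intro hmin
    have hkey : ∀ i, |g i| ≤ lam := by
      intro i
      set C : ℝ := ∑ j, (A j i) ^ 2 with hC
      have hC0 : 0 ≤ C := Finset.sum_nonneg fun j _ => sq_nonneg _
      have hineq : ∀ t : ℝ, 0 ≤ t ^ 2 * C / 2 - g i * t + lam * |t| := by
        intro t
        have h := hmin (Pi.single i t)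
        rw [phi_expand A b lam (Pi.single i t)] at h
        have h1 : l1 (Pi.single i t) = |t| := by
          simp [l1, Pi.single_apply, apply_ite abs]
        have h2 : dot g (Pi.single i t) = g i * t := by
          simp [dot, Pi.single_apply, mul_ite, Finset.sum_ite_eq']
        have h3 : sqnorm (A.mulVec (Pi.single i t)) = t ^ 2 * C := by
          simp only [sqnorm, hC, Matrix.mulVec, dotProduct,
            Pi.single_apply, mul_ite, mul_zero, Finset.sum_ite_eq',
            Finset.mem_univ, if_true, Finset.mul_sum]
          apply Finset.sum_congr rfl; intro j _; ring
        rw [h1, h2, h3] at h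
        linarith
      have hδ : ∀ δ : ℝ, 0 < δ → |g i| ≤ lam + δ * C / 2 := by
        intro δ hδ
        rcases le_or_gt 0 (g i) with h0 | h0
        · have := hineq δ
          rw [abs_of_pos hδ] at this
          rw [abs_of_nonneg h0]
          nlinarith
        · have := hineq (-δ)
          rw [abs_neg, abs_of_pos hδ] at this
          rw [abs_of_neg h0]
          nlinarith
      refine le_of_forall_pos_le_add fun ε hε => ?_
      have hd : 0 < 2 * ε / (C + 1) := by positivity
      have := hδ _ hd
      have hle : 2 * ε / (C + 1) * C / 2 ≤ ε := by
        rw [div_mul_eq_mul_div, div_div, div_le_iff₀ (by linarith)]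
        nlinarith
      linarith
    rcases isEmpty_or_nonempty (Fin n) with hn | hn
    · have : linf g = 0 := by
        simp [linf, Real.iSup_of_isEmpty]
      rw [this]; exact hlam.le
    · exact ciSup_le hkey
  · intro hlinf x
    rw [phi_expand A b lam x]
    have hbdd : BddAbove (Set.range fun i => |g i|) :=
      (Set.finite_range _).bddAbove
    have hkey : ∀ i, |g i| ≤ lam := fun i =>
      le_trans (le_ciSup hbdd i) hlinf
    have hdot : dot g x ≤ lam * l1 x := by
      rw [dot, l1, Finset.mul_sum]
      apply Finset.sum_le_sum
      intro i _
      calc g i * x i ≤ |g i * x i| := le_abs_self _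
        _ = |g i| * |x i| := abs_mul _ _
        _ ≤ lam * |x i| := mul_le_mul_of_nonneg_right (hkey i) (abs_nonneg _)
    have hsq : 0 ≤ sqnorm (A.mulVec x) := Finset.sum_nonneg fun j _ => sq_nonneg _
    linarith

end PGH
end
end
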